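/- Under the hypotheses of the previous statement (a* a minimum-cardinality nonzero vector in Im(H), U its zero set, rank(H_U) = n - 1), for every index i ∉ U, the submatrix H_{U ∪ {i}} obtained by adjoining row i to H_U has rank n. -/
import Mathlib


open Matrix

/-- Under the hypotheses of Lemma 1 (a* = Hc a minimum-cardinality nonzero vector
in Im(H), U its zero set, rank(H_U) = n-1), adjoining any row i ∉ U to H_U
yields a submatrix of full rank n. -/
theorem adjoining_corrupted_row_full_rank (m n : ℕ) (hn : 1 ≤ n)
    (H : Matrix (Fin m) (Fin n) ℝ) (hrank : H.rank = n)
    (c : Fin n → ℝ) (ha : H.mulVec c ≠ 0)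
    (hmin : ∀ c' : Fin n → ℝ, H.mulVec c' ≠ 0 →
      Set.ncard {i | H.mulVec c i ≠ 0} ≤ Set.ncard {i | H.mulVec c' i ≠ 0})
    (hU : (H.submatrix (fun i : {i : Fin m // H.mulVec c i = 0} => (i : Fin m)) id).rank
      = n - 1)
    (i : Fin m) (hi : H.mulVec c i ≠ 0) :
    (H.submatrix
      (fun j : {j : Fin m // H.mulVec c j = 0 ∨ j = i} => (j : Fin m)) id).rank
      = n := by
  classical
  set A := H.submatrix
      (fun j : {j : Fin m // H.mulVec c j = 0 ∨ j = i} => (j : Fin m)) id with hA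
  set B := H.submatrix (fun i : {i : Fin m // H.mulVec c i = 0} => (i : Fin m)) id with hB
  have hsub : ∀ {α : Type} [Fintype α] (f : α → Fin m) (x : Fin n → ℝ) (j : α),
      (H.submatrix f id).mulVec x j = H.mulVec x (f j) := by
    intro α _ f x j
    simp [Matrix.mulVec, Matrix.submatrix_apply, dotProduct]
  have hcne : c ≠ 0 := by
    intro h
    apply hi
    simp [h]
  -- c is in the kernel of B
  have hcB : c ∈ LinearMap.ker B.mulVecLin := by
    rw [LinearMap.mem_ker, Matrix.mulVecLin_apply]
    funext j
    rw [hB, hsub]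
    exact j.2
  -- rank-nullity for B : finrank ker B = 1
  have hrnB := B.mulVecLin.finrank_range_add_finrank_ker
  rw [Matrix.rank] at hU
  rw [hU] at hrnB
  simp only [Module.finrank_fintype_fun_eq_card, Fintype.card_fin] at hrnB
  have hkerB1 : Module.finrank ℝ (LinearMap.ker B.mulVecLin) = 1 := by omega
  -- hence ker B = span of c
  have hspan : Submodule.span ℝ {c} = LinearMap.ker B.mulVecLin := by
    apply Submodule.eq_of_le_of_finrank_eq
    · rwa [Submodule.span_singleton_le_iff_mem]
    · rw [hkerB1, finrank_span_singleton hcne]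
  -- kernel of A is trivial
  have hkerA : LinearMap.ker A.mulVecLin = ⊥ := by
    rw [eq_bot_iff]
    intro x hx
    rw [LinearMap.mem_ker, Matrix.mulVecLin_apply] at hx
    have hxB : x ∈ LinearMap.ker B.mulVecLin := by
      rw [LinearMap.mem_ker, Matrix.mulVecLin_apply]
      funext j
      rw [hB, hsub]
      have := congrFun hx ⟨j.1, Or.inl j.2⟩
      rwa [hA, hsub] at this
    rw [← hspan, Submodule.mem_span_singleton] at hxB
    obtain ⟨t, rfl⟩ := hxB
    have hxi := congrFun hx ⟨i, Or.inr rfl⟩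
    rw [hA, hsub, Matrix.mulVec_smul] at hxi
    have ht : t = 0 := by
      by_contra ht
      exact hi (by simpa [ht] using hxi)
    simp [ht]
  -- rank-nullity for A
  have hrnA := A.mulVecLin.finrank_range_add_finrank_ker
  rw [hkerA] at hrnA
  simp only [Module.finrank_fintype_fun_eq_card, Fintype.card_fin, finrank_bot,
    add_zero] at hrnA
  rw [Matrix.rank]
  exact hrnA
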